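/- Let α be a real number and set c = cosh(α), s = sinh(α). Let K₁ = [[−i·c, c],[i·s, s]] and K₂ = [[i·s, s],[−i·c, c]] be 2×2 complex matrices. Then the entrywise imaginary part of K₂†K₁ is the 2×2 zero matrix. Moreover, letting K be the 2×4 complex matrix whose columns, in order, are the first column of K₁, the first column of K₂, the second column of K₁, and the second column of K₂, one has Σ·Im(K†K) = −I₄ and Σ·Re(K†K)·Σᵀ = 2V, where Σ = [[0, I₂],[−I₂, 0]] and V = (1/2)[[cosh 2α, sinh 2α, 0, 0],[sinh 2α, cosh 2α, 0, 0],[0, 0, cosh 2α, −sinh 2α],[0, 0, −sinh 2α, cosh 2α]]. -/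
import Mathlib


/-!
STATEMENT 15: With c = cosh α, s = sinh α, K₁ = [[−ic, c],[is, s]] and
K₂ = [[is, s],[−ic, c]] (the coupling matrices of the second cascade realization),
one has Im(K₂†K₁) = 0; and with K the 2×4 matrix whose columns are, in order, the
first column of K₁, the first column of K₂, the second column of K₁ and the second
column of K₂: Σ·Im(K†K) = −I₄ and Σ·Re(K†K)·Σᵀ = 2V, where Σ = [[0, I₂],[−I₂, 0]]
and V is the two-mode squeezed covariance matrix.
-/

open Matrix

noncomputable section

def K1 (α : ℝ) : Matrix (Fin 2) (Fin 2) ℂ :=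
  !![-Complex.I * (Real.cosh α : ℂ), (Real.cosh α : ℂ);
     Complex.I * (Real.sinh α : ℂ), (Real.sinh α : ℂ)]

def K2 (α : ℝ) : Matrix (Fin 2) (Fin 2) ℂ :=
  !![Complex.I * (Real.sinh α : ℂ), (Real.sinh α : ℂ);
     -Complex.I * (Real.cosh α : ℂ), (Real.cosh α : ℂ)]

/-- The 2×4 matrix whose columns are, in order, the first column of K₁, the first
column of K₂, the second column of K₁ and the second column of K₂. -/
def Kfull (α : ℝ) : Matrix (Fin 2) (Fin 4) ℂ :=
  Matrix.of fun i j =>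
    if j = 0 then K1 α i 0
    else if j = 1 then K2 α i 0
    else if j = 2 then K1 α i 1
    else K2 α i 1

/-- The 4×4 symplectic matrix Σ = [[0, I₂],[−I₂, 0]]. -/
def sympJ4 : Matrix (Fin 4) (Fin 4) ℝ :=
  !![0, 0, 1, 0;
     0, 0, 0, 1;
     -1, 0, 0, 0;
     0, -1, 0, 0]

/-- The covariance matrix of the two-mode squeezed state with squeezing parameter α. -/
def twoModeCov (α : ℝ) : Matrix (Fin 4) (Fin 4) ℝ :=
  (1/2 : ℝ) • !![Real.cosh (2*α), Real.sinh (2*α), 0, 0;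
                 Real.sinh (2*α), Real.cosh (2*α), 0, 0;
                 0, 0, Real.cosh (2*α), -Real.sinh (2*α);
                 0, 0, -Real.sinh (2*α), Real.cosh (2*α)]

lemma Kfull_eq (α : ℝ) : Kfull α =
    !![-Complex.I * (Real.cosh α : ℂ), Complex.I * (Real.sinh α : ℂ),
        (Real.cosh α : ℂ), (Real.sinh α : ℂ);
       Complex.I * (Real.sinh α : ℂ), -Complex.I * (Real.cosh α : ℂ),
        (Real.sinh α : ℂ), (Real.cosh α : ℂ)] := by
  ext i j
  fin_cases i <;> fin_cases j <;> simp [Kfull, K1, K2]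

lemma Kre_eq (α : ℝ) : ((Kfull α)ᴴ * Kfull α).map Complex.re =
    !![Real.cosh α ^ 2 + Real.sinh α ^ 2, -(2 * Real.sinh α * Real.cosh α), 0, 0;
       -(2 * Real.sinh α * Real.cosh α), Real.cosh α ^ 2 + Real.sinh α ^ 2, 0, 0;
       0, 0, Real.cosh α ^ 2 + Real.sinh α ^ 2, 2 * Real.sinh α * Real.cosh α;
       0, 0, 2 * Real.sinh α * Real.cosh α, Real.cosh α ^ 2 + Real.sinh α ^ 2] := by
  ext i j
  fin_cases i <;> fin_cases j <;>
    simp [Kfull_eq, Matrix.mul_apply, Fin.sum_univ_succ, Complex.sinh_ofReal_re,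
      Complex.sinh_ofReal_im, Complex.cosh_ofReal_re, Complex.cosh_ofReal_im,
      Matrix.vecHead, Matrix.vecTail] <;> ring

set_option maxHeartbeats 2000000 in
theorem second_realization_two_mode_squeezed (α : ℝ) :
    ((K2 α)ᴴ * K1 α).map Complex.im = 0 ∧
    sympJ4 * ((Kfull α)ᴴ * Kfull α).map Complex.im = -1 ∧
    sympJ4 * ((Kfull α)ᴴ * Kfull α).map Complex.re * sympJ4ᵀ = (2 : ℝ) • twoModeCov α := by
  have hc2 : Real.cosh (2*α) = Real.cosh α ^ 2 + Real.sinh α ^ 2 := by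
    rw [two_mul, Real.cosh_add]; ring
  have hs2 : Real.sinh (2*α) = 2 * Real.sinh α * Real.cosh α := by
    rw [two_mul, Real.sinh_add]; ring
  have hpyth := Real.cosh_sq_sub_sinh_sq α
  refine ⟨?_, ?_, ?_⟩
  · ext i j
    fin_cases i <;> fin_cases j <;>
      simp [K1, K2, Matrix.mul_apply, Fin.sum_univ_succ, Complex.sinh_ofReal_re,
        Complex.sinh_ofReal_im, Complex.cosh_ofReal_re, Complex.cosh_ofReal_im] <;> ring
  · ext i j
    fin_cases i <;> fin_cases j <;>
      simp [Kfull_eq, sympJ4, Matrix.mul_apply, Fin.sum_univ_succ, Matrix.one_apply,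
        Complex.sinh_ofReal_re, Complex.sinh_ofReal_im, Complex.cosh_ofReal_re,
        Complex.cosh_ofReal_im] <;> nlinarith [hpyth]
  · rw [Kre_eq]
    ext i j
    fin_cases i <;> fin_cases j <;>
      simp [sympJ4, twoModeCov, Matrix.mul_apply, Fin.sum_univ_succ, hc2, hs2,
        Matrix.vecHead, Matrix.vecTail, Matrix.transpose_apply] <;> ring
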